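/- arXiv:2402.16357 — 7 statements merged into one kernel-verified Lean document; each statement's English description precedes it below -/
import Mathlib

section
/- Let K_1, …, K_r be the conjugacy classes of G. For each j, let (a_{K_j,i})_{i≥0} be the sequence in RS(F,ℚ) whose first d terms (a_{K_j,0}, …, a_{K_j,d−1}) are given by the j-th column of the d×r matrix P · Γ_ξ^{−1} · κ. Then for all but finitely many prime numbers p (in particular p unramified in L), one has a_{K_j,p} ≡ 1 (mod p) if the Frobenius conjugacy class Frob_p of p in G is contained in K_j, and a_{K_j,p} ≡ 0 (mod p) otherwise. -/
open scoped BigOperators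

/-- `x ≡ y (mod p)` for rational numbers: `x - y = p·(m/n)` with `p ∤ n`. -/
def RatModEq (p : ℕ) (x y : ℚ) : Prop :=
  ∃ m n : ℤ, ¬ (p : ℤ) ∣ n ∧ (x - y) * (n : ℚ) = (p : ℚ) * (m : ℚ)

/-- `Frob : Gal(L/ℚ)` is a Frobenius automorphism at the prime ideal `𝔭` of the ring of
integers of `L` for the prime `p`: `Frob x ≡ x^p (mod 𝔭)` for every algebraic integer
`x` of `L`. -/
def IsFrobeniusAt (L : Type*) [Field L] [CharZero L]
    (p : ℕ) (𝔭 : Ideal (NumberField.RingOfIntegers L)) (Frob : L ≃ₐ[ℚ] L) : Prop :=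
  ∀ x y : NumberField.RingOfIntegers L,
    algebraMap (NumberField.RingOfIntegers L) L y =
      Frob (algebraMap (NumberField.RingOfIntegers L) L x) →
    y - x ^ p ∈ 𝔭

/-- Let `(a_i)_{i≥0} ∈ RS(F,ℚ)` be the sequence whose first `d` terms are the column of
`P Γ_ξ⁻¹ κ` corresponding to the conjugacy class `K` of `G = Gal(L/ℚ)`.  Then for all but
finitely many primes `p`, `a_p ≡ 1 (mod p)` if the Frobenius conjugacy class of `p` is
`K`, and `a_p ≡ 0 (mod p)` otherwise. -/
theorem stmt0 (L : Type*) [Field L] [CharZero L] [FiniteDimensional ℚ L] [IsGalois ℚ L]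
    [DecidableEq (L ≃ₐ[ℚ] L)]
    (d : ℕ) (hd : 0 < d) (hdeg : Module.finrank ℚ L = d)
    (c : Fin d → ℤ) (F : Polynomial ℤ)
    (hF : F = Polynomial.X ^ d + ∑ j : Fin d, Polynomial.C (c j) * Polynomial.X ^ (j : ℕ))
    (hFirr : Irreducible (F.map (Int.castRingHom ℚ)))
    (ξ : L) (hξ : Polynomial.aeval ξ F = 0)
    (hNB : ∃ b : Module.Basis (L ≃ₐ[ℚ] L) ℚ L, ∀ σ : L ≃ₐ[ℚ] L, b σ = σ ξ)
    (K : ConjClasses (L ≃ₐ[ℚ] L)) [DecidablePred (· ∈ K.carrier)]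
    (a : ℕ → ℚ)
    (ha : ∀ i, a (i + d) = -∑ j : Fin d, (c j : ℚ) * a (i + (j : ℕ)))
    (hinit : ∀ i : Fin d, algebraMap ℚ L (a (i : ℕ)) =
      ∑ σ : L ≃ₐ[ℚ] L, (σ⁻¹ ξ) ^ (i : ℕ) *
        ((Matrix.of fun σ' τ' : L ≃ₐ[ℚ] L => (σ' * τ'⁻¹) ξ)⁻¹.mulVec
          (fun τ : L ≃ₐ[ℚ] L => if τ ∈ K.carrier then (1 : L) else 0)) σ) :
    ∃ S : Finset ℕ, ∀ p : ℕ, p.Prime → p ∉ S →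
      ∀ 𝔭 : Ideal (NumberField.RingOfIntegers L), 𝔭.IsMaximal →
        (p : NumberField.RingOfIntegers L) ∈ 𝔭 →
        ∀ Frob : L ≃ₐ[ℚ] L, IsFrobeniusAt L p 𝔭 Frob →
          ((Frob ∈ K.carrier → RatModEq p (a p) 1) ∧
           (Frob ∉ K.carrier → RatModEq p (a p) 0)) := by
  haveI : NumberField L := ⟨⟩
  -- F is monic
  have hmon : F.Monic := by
    rw [hF]
    apply Polynomial.monic_X_pow_add
    apply lt_of_le_of_lt (Polynomial.degree_sum_le _ _)
    rw [Finset.sup_lt_iff (by exact_mod_cast WithBot.bot_lt_coe (d : ℕ))]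
    intro j _
    calc Polynomial.degree (Polynomial.C (c j) * Polynomial.X ^ (j:ℕ) : Polynomial ℤ)
        ≤ Polynomial.degree (Polynomial.C (c j)) +
          Polynomial.degree (Polynomial.X ^ (j:ℕ) : Polynomial ℤ) := Polynomial.degree_mul_le _ _
      _ ≤ 0 + (j:ℕ) := add_le_add Polynomial.degree_C_le (Polynomial.degree_X_pow_le _)
      _ < (d : WithBot ℕ) := by rw [zero_add]; exact_mod_cast j.2
  have hξint : IsIntegral ℤ ξ := ⟨F, hmon, by rwa [← Polynomial.aeval_def]⟩
  have hconjint : ∀ σ : L ≃ₐ[ℚ] L, IsIntegral ℤ (σ ξ) := fun σ =>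
    hξint.map (σ.toAlgHom.restrictScalars ℤ)
  -- the root equation for every conjugate of ξ
  have heq0 : ξ ^ d + ∑ j : Fin d, (c j : L) * ξ ^ (j:ℕ) = 0 := by
    rw [hF] at hξ
    simpa [map_add, map_pow, map_sum, map_mul, eq_intCast] using hξ
  have hroot : ∀ σ : L ≃ₐ[ℚ] L, (σ ξ) ^ d = -∑ j : Fin d, (c j : L) * (σ ξ) ^ (j:ℕ) := by
    intro σ
    have h := congrArg σ heq0
    simp only [map_add, map_pow, map_sum, map_mul, map_intCast, map_zero] at h
    exact eq_neg_of_add_eq_zero_left h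
  obtain ⟨bb, hbb⟩ := hNB
  set Γ : Matrix (L ≃ₐ[ℚ] L) (L ≃ₐ[ℚ] L) L :=
    Matrix.of fun σ' τ' : L ≃ₐ[ℚ] L => (σ' * τ'⁻¹) ξ with hΓdef
  set κv : (L ≃ₐ[ℚ] L) → L := fun τ => if τ ∈ K.carrier then (1 : L) else 0 with hκdef
  set b : (L ≃ₐ[ℚ] L) → L := Γ⁻¹.mulVec κv with hbdef
  -- Γ is invertible (Dedekind's independence of characters)
  have hdet : Γ.det ≠ 0 := by
    intro h0
    obtain ⟨v, hv0, hv⟩ := Matrix.exists_vecMul_eq_zero_iff.mpr h0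
    have hvτ : ∀ τ : L ≃ₐ[ℚ] L, ∑ σ : L ≃ₐ[ℚ] L, v σ * σ (τ⁻¹ ξ) = 0 := by
      intro τ
      have := congrFun hv τ
      simpa [Matrix.vecMul, dotProduct, hΓdef, AlgEquiv.mul_apply] using this
    have hall : ∀ z : L, ∑ σ : L ≃ₐ[ℚ] L, v σ * σ z = 0 := by
      have hf : (∑ σ : L ≃ₐ[ℚ] L,
          (LinearMap.mulLeft ℚ (v σ)).comp (σ.toLinearMap : L →ₗ[ℚ] L)) = 0 := by
        apply bb.ext
        intro σ
        have h := hvτ σ⁻¹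
        simp only [inv_inv] at h
        simp [hbb, LinearMap.sum_apply, LinearMap.mulLeft_apply, h]
      intro z
      have := congrFun (congrArg (fun f => (f : L →ₗ[ℚ] L).toFun) hf) z
      simpa [LinearMap.sum_apply, LinearMap.mulLeft_apply] using this
    have hinj : Function.Injective (fun σ : L ≃ₐ[ℚ] L => (σ : L →* L)) := by
      intro σ τ h
      ext z
      have := congrFun (congrArg (fun f => (f : L →* L).toFun) h) z
      simpa using this
    have hLI := (linearIndependent_monoidHom L L).comp _ hinj
    have := Fintype.linearIndependent_iff.mp hLI v ?_
    · exact hv0 (funext fun σ => this σ)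
    · funext z
      simpa [Finset.sum_apply, smul_eq_mul] using hall z
  have hGb : ∀ σ : L ≃ₐ[ℚ] L, (∑ τ : L ≃ₐ[ℚ] L, (σ * τ⁻¹) ξ * b τ) = κv σ := by
    intro σ
    have h1 : Γ.mulVec b = κv := by
      rw [hbdef, Matrix.mulVec_mulVec, Matrix.mul_nonsing_inv _ (isUnit_iff_ne_zero.mpr hdet),
        Matrix.one_mulVec]
    have := congrFun h1 σ
    simpa [Matrix.mulVec, dotProduct, hΓdef] using this
  -- closed form for a
  have hA : ∀ i, algebraMap ℚ L (a i) = ∑ σ : L ≃ₐ[ℚ] L, (σ⁻¹ ξ) ^ i * b σ := by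
    intro i
    induction i using Nat.strong_induction_on with
    | _ i ih =>
      rcases lt_or_ge i d with h | h
      · exact hinit ⟨i, h⟩
      · obtain ⟨k, rfl⟩ : ∃ k, i = k + d := ⟨i - d, (Nat.sub_add_cancel h).symm⟩
        have h1 : algebraMap ℚ L (a (k + d)) =
            -∑ j : Fin d, (c j : L) * ∑ σ : L ≃ₐ[ℚ] L, (σ⁻¹ ξ) ^ (k + (j:ℕ)) * b σ := by
          rw [ha k, map_neg, map_sum]
          congr 1
          refine Finset.sum_congr rfl fun j _ => ?_
          rw [map_mul, map_intCast, ih (k + (j:ℕ)) (by omega)]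
        rw [h1]
        have h2 : ∀ σ : L ≃ₐ[ℚ] L, (σ⁻¹ ξ) ^ (k+d) * b σ
            = ∑ j : Fin d, -((c j : L) * ((σ⁻¹ ξ) ^ (k+(j:ℕ)) * b σ)) := by
          intro σ
          rw [pow_add, hroot σ⁻¹, mul_neg, neg_mul, Finset.mul_sum, Finset.sum_mul,
            ← Finset.sum_neg_distrib]
          refine Finset.sum_congr rfl fun j _ => ?_
          rw [pow_add]; ring
        rw [Finset.sum_congr rfl fun σ _ => h2 σ, Finset.sum_comm]
        simp [Finset.sum_neg_distrib, Finset.mul_sum]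
  -- a common denominator for the sequence
  obtain ⟨D, hD0, hD⟩ : ∃ D : ℕ, D ≠ 0 ∧ ∀ i, ∃ m : ℤ, (D : ℚ) * a i = m := by
    refine ⟨∏ i : Fin d, (a (i:ℕ)).den, by positivity, ?_⟩
    intro i
    induction i using Nat.strong_induction_on with
    | _ i ih =>
      rcases lt_or_ge i d with h | h
      · refine ⟨(∏ x ∈ Finset.univ.erase (⟨i, h⟩ : Fin d), ((a (x:ℕ)).den : ℤ)) * (a i).num, ?_⟩
        have hsplit : (∏ x : Fin d, (a (x:ℕ)).den)
            = (a i).den * ∏ x ∈ Finset.univ.erase (⟨i, h⟩ : Fin d), (a (x:ℕ)).den := by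
          have := Finset.mul_prod_erase Finset.univ (fun x : Fin d => (a (x:ℕ)).den)
            (Finset.mem_univ (⟨i, h⟩ : Fin d))
          simpa using this.symm
        rw [hsplit]
        push_cast
        rw [mul_comm ((a i).den : ℚ) _, mul_assoc, mul_comm ((a i).den : ℚ) (a i),
          Rat.mul_den_eq_num]
      · obtain ⟨k, rfl⟩ : ∃ k, i = k + d := ⟨i - d, (Nat.sub_add_cancel h).symm⟩
        choose m hm using fun j : Fin d => ih (k + (j:ℕ)) (by omega)
        refine ⟨-∑ j : Fin d, c j * m j, ?_⟩
        rw [ha k, mul_neg, Finset.mul_sum, Int.cast_neg, Int.cast_sum]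
        refine congrArg Neg.neg (Finset.sum_congr rfl fun j _ => ?_)
        rw [Int.cast_mul, ← hm j]; ring
  -- a common denominator for b
  obtain ⟨N, hN0, hNβ⟩ : ∃ N : ℤ, N ≠ 0 ∧ ∀ σ : L ≃ₐ[ℚ] L, ∃ β : NumberField.RingOfIntegers L,
      algebraMap (NumberField.RingOfIntegers L) L β = (N : L) * b σ := by
    classical
    obtain ⟨N, hN0, hN⟩ := exists_integral_multiples ℤ ℚ (L := L) (Finset.univ.image b)
    refine ⟨N, hN0, fun σ => ?_⟩
    have h1 : IsIntegral ℤ (N • b σ) := hN _ (Finset.mem_image_of_mem b (Finset.mem_univ σ))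
    refine ⟨⟨N • b σ, h1⟩, ?_⟩
    simp [zsmul_eq_mul]
  choose β hβ using hNβ
  refine ⟨N.natAbs.primeFactors ∪ D.primeFactors, ?_⟩
  intro p hp hpS 𝔭 hmax hp𝔭 Frob hFrob
  have hpint : Prime (p : ℤ) := Nat.prime_iff_prime_int.mp hp
  have hpN : ¬ (p : ℤ) ∣ N := by
    intro hdvd
    exact hpS (Finset.mem_union_left _ (Nat.mem_primeFactors.mpr
      ⟨hp, by simpa using Int.natAbs_dvd_natAbs.mpr hdvd, Int.natAbs_ne_zero.mpr hN0⟩))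
  have hpD : ¬ p ∣ D := fun hdvd =>
    hpS (Finset.mem_union_right _ (Nat.mem_primeFactors.mpr ⟨hp, hdvd, hD0⟩))
  set ε : ℚ := if Frob ∈ K.carrier then 1 else 0 with hεdef
  set ε' : ℤ := if Frob ∈ K.carrier then 1 else 0 with hε'def
  have hεε' : (ε' : ℚ) = ε := by rw [hεdef, hε'def]; split_ifs <;> simp
  -- integral elements
  set x : (L ≃ₐ[ℚ] L) → NumberField.RingOfIntegers L :=
    fun σ => ⟨σ⁻¹ ξ, hconjint σ⁻¹⟩ with hxdef
  set y : (L ≃ₐ[ℚ] L) → NumberField.RingOfIntegers L :=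
    fun σ => ⟨Frob (σ⁻¹ ξ), (hconjint σ⁻¹).map (Frob.toAlgHom.restrictScalars ℤ)⟩ with hydef
  have hFr : ∀ σ : L ≃ₐ[ℚ] L, y σ - (x σ) ^ p ∈ 𝔭 := fun σ => hFrob (x σ) (y σ) rfl
  have hsum𝔭 : (D : NumberField.RingOfIntegers L) *
      ((∑ σ : L ≃ₐ[ℚ] L, β σ * (x σ) ^ p) - ∑ σ : L ≃ₐ[ℚ] L, β σ * y σ) ∈ 𝔭 := by
    apply Ideal.mul_mem_left
    rw [← Finset.sum_sub_distrib]
    apply Ideal.sum_mem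
    intro σ _
    rw [← mul_sub]
    apply Ideal.mul_mem_left
    have := 𝔭.neg_mem (hFr σ)
    rwa [neg_sub] at this
  obtain ⟨m1, hm1⟩ := hD p
  have hinjO : Function.Injective (algebraMap (NumberField.RingOfIntegers L) L) :=
    NumberField.RingOfIntegers.coe_injective
  have him1 : algebraMap (NumberField.RingOfIntegers L) L (∑ σ : L ≃ₐ[ℚ] L, β σ * (x σ) ^ p)
      = (N : L) * algebraMap ℚ L (a p) := by
    rw [map_sum, hA p, Finset.mul_sum]
    refine Finset.sum_congr rfl fun σ _ => ?_
    rw [map_mul, map_pow, hβ σ]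
    show ((N : L) * b σ) * (σ⁻¹ ξ) ^ p = (N : L) * ((σ⁻¹ ξ) ^ p * b σ)
    ring
  have him2 : algebraMap (NumberField.RingOfIntegers L) L (∑ σ : L ≃ₐ[ℚ] L, β σ * y σ)
      = (N : L) * algebraMap ℚ L ε := by
    rw [map_sum]
    calc ∑ σ : L ≃ₐ[ℚ] L, algebraMap (NumberField.RingOfIntegers L) L (β σ * y σ)
        = (N : L) * ∑ τ : L ≃ₐ[ℚ] L, (Frob * τ⁻¹) ξ * b τ := by
          rw [Finset.mul_sum]
          refine Finset.sum_congr rfl fun σ _ => ?_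
          rw [map_mul, hβ σ]
          show ((N : L) * b σ) * (Frob (σ⁻¹ ξ)) = (N : L) * ((Frob * σ⁻¹) ξ * b σ)
          rw [AlgEquiv.mul_apply]; ring
      _ = (N : L) * κv Frob := by rw [hGb Frob]
      _ = (N : L) * algebraMap ℚ L ε := by
          rw [hκdef, hεdef]
          by_cases h : Frob ∈ K.carrier <;> simp [h]
  set k : ℤ := N * m1 - N * D * ε' with hkdef
  have hkmem : (k : NumberField.RingOfIntegers L) ∈ 𝔭 := by
    have hkeq : (k : NumberField.RingOfIntegers L) = (D : NumberField.RingOfIntegers L) *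
        ((∑ σ : L ≃ₐ[ℚ] L, β σ * (x σ) ^ p) - ∑ σ : L ≃ₐ[ℚ] L, β σ * y σ) := by
      apply hinjO
      rw [map_intCast, map_mul, map_sub, him1, him2, map_natCast]
      have e1 : (D : L) * algebraMap ℚ L (a p) = (m1 : L) := by
        have h := congrArg (algebraMap ℚ L) hm1
        rwa [map_mul, map_natCast, map_intCast] at h
      have e2 : algebraMap ℚ L ε = (ε' : L) := by
        rw [← hεε']
        push_cast
        simp
      rw [mul_sub, ← mul_assoc, mul_comm (D : L) (N : L), mul_assoc, e1, e2, hkdef]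
      push_cast
      ring
    rw [hkeq]
    exact hsum𝔭
  have hpk : (p : ℤ) ∣ k := by
    have hmaxp : (Ideal.span {(p : ℤ)}).IsMaximal :=
      PrincipalIdealRing.isMaximal_of_irreducible hpint.irreducible
    have hle : Ideal.span {(p : ℤ)} ≤ 𝔭.comap (algebraMap ℤ (NumberField.RingOfIntegers L)) := by
      rw [Ideal.span_le]
      intro z hz
      rw [Set.mem_singleton_iff] at hz
      subst hz
      rw [SetLike.mem_coe, Ideal.mem_comap, map_natCast]
      exact hp𝔭
    have hne : 𝔭.comap (algebraMap ℤ (NumberField.RingOfIntegers L)) ≠ ⊤ := by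
      intro h
      have h1 : (1:ℤ) ∈ 𝔭.comap (algebraMap ℤ (NumberField.RingOfIntegers L)) :=
        h ▸ Submodule.mem_top
      rw [Ideal.mem_comap, map_one] at h1
      exact hmax.ne_top (Ideal.eq_top_of_isUnit_mem _ h1 isUnit_one)
    have heq := hmaxp.eq_of_le hne hle
    have hk2 : k ∈ Ideal.span {(p : ℤ)} := by
      rw [heq, Ideal.mem_comap]
      have he : (algebraMap ℤ (NumberField.RingOfIntegers L)) k
          = (k : NumberField.RingOfIntegers L) := by simp
      rwa [he]
    exact Ideal.mem_span_singleton.mp hk2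
  obtain ⟨m, hmk⟩ := hpk
  have key : RatModEq p (a p) ε := by
    refine ⟨m, N * D, ?_, ?_⟩
    · intro hdvd
      rcases hpint.dvd_mul.mp hdvd with h | h
      · exact hpN h
      · exact hpD (Int.ofNat_dvd.mp (by exact_mod_cast h))
    · have hcast : (k : ℚ) = p * m := by rw [hmk]; push_cast; ring
      rw [← hcast, hkdef]
      push_cast [← hεε']
      linear_combination (N : ℚ) * hm1
  constructor
  · intro h
    rw [hεdef, if_pos h] at key
    exact key
  · intro h
    rw [hεdef, if_neg h] at key
    exact key
end

section
/- Let (a_{K_j,i})_{i≥0} be the sequence in RS(F,ℚ) whose first d terms are the j-th column of P · Γ_ξ^{−1} · κ. Then for every integer i ≥ 0, a_{K_j,i} = (1/det Γ_ξ) · Σ_{σ∈G} Σ_{τ∈K_j} σ(ξ^i) · ∂_{στ}(ξ). -/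
open scoped BigOperators

/-- The group matrix `Γ = [X_{στ⁻¹}]` of a finite group `G`, over `ℚ[X_σ : σ ∈ G]`. -/
noncomputable def groupMatrix (G : Type*) [Group G] [Fintype G] [DecidableEq G] :
    Matrix G G (MvPolynomial G ℚ) :=
  Matrix.of fun σ τ : G => MvPolynomial.X (σ * τ⁻¹)

/-- `∂_τ = (1/|G|) ∂(det Γ)/∂X_τ`. -/
noncomputable def groupDetDeriv (G : Type*) [Group G] [Fintype G] [DecidableEq G] (τ : G) :
    MvPolynomial G ℚ :=
  ((Fintype.card G : ℚ))⁻¹ • MvPolynomial.pderiv τ (groupMatrix G).det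

section AuxLemmas
open Finset MvPolynomial Matrix

variable {G : Type*} [Group G] [Fintype G] [DecidableEq G]

lemma pderiv_finset_prod {ι : Type*} [DecidableEq ι] (τ : G) (s : Finset ι)
    (f : ι → MvPolynomial G ℚ) :
    MvPolynomial.pderiv τ (∏ j ∈ s, f j)
      = ∑ j ∈ s, (∏ k ∈ s.erase j, f k) * MvPolynomial.pderiv τ (f j) := by
  induction s using Finset.induction_on with
  | empty => simp
  | insert a s ha ih =>
    have h2 : ∑ j ∈ s, (∏ k ∈ (insert a s).erase j, f k) * MvPolynomial.pderiv τ (f j)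
        = f a * MvPolynomial.pderiv τ (∏ j ∈ s, f j) := by
      rw [ih, Finset.mul_sum]
      refine Finset.sum_congr rfl fun j hj => ?_
      rw [Finset.erase_insert_of_ne (by rintro rfl; exact ha hj),
        Finset.prod_insert (fun h => ha (Finset.mem_of_mem_erase h))]
      ring
    rw [Finset.prod_insert ha, pderiv_mul, Finset.sum_insert ha, Finset.erase_insert ha, h2]
    ring

lemma pderiv_det (τ : G) (M : Matrix G G (MvPolynomial G ℚ)) :
    MvPolynomial.pderiv τ M.det
      = ∑ i : G, (M.updateRow i fun j => MvPolynomial.pderiv τ (M i j)).det := by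
  simp only [Matrix.det_apply']
  rw [map_sum]
  have key : ∀ π : Equiv.Perm G,
      MvPolynomial.pderiv τ (((Equiv.Perm.sign π : ℤ) : MvPolynomial G ℚ) * ∏ i, M (π i) i)
        = ∑ i : G, ((Equiv.Perm.sign π : ℤ) : MvPolynomial G ℚ)
            * ∏ j, (M.updateRow i fun j' => MvPolynomial.pderiv τ (M i j')) (π j) j := by
    intro π
    rw [pderiv_mul, Derivation.map_intCast, zero_mul, zero_add,
      pderiv_finset_prod, Finset.mul_sum]
    rw [← Equiv.sum_comp π
      (fun i => ((Equiv.Perm.sign π : ℤ) : MvPolynomial G ℚ)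
        * ∏ j, (M.updateRow i fun j' => MvPolynomial.pderiv τ (M i j')) (π j) j)]
    refine Finset.sum_congr rfl fun i _ => ?_
    have hprod : (∏ j, (M.updateRow (π i) fun j' => MvPolynomial.pderiv τ (M (π i) j')) (π j) j)
        = MvPolynomial.pderiv τ (M (π i) i) * ∏ k ∈ Finset.univ.erase i, M (π k) k := by
      have h1 : ∀ j : G, (M.updateRow (π i) fun j' => MvPolynomial.pderiv τ (M (π i) j')) (π j) j
          = if j = i then MvPolynomial.pderiv τ (M (π i) j) else M (π j) j := by
        intro j
        rw [Matrix.updateRow_apply]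
        simp [EmbeddingLike.apply_eq_iff_eq]
      simp only [h1]
      rw [← Finset.mul_prod_erase Finset.univ _ (Finset.mem_univ i), if_pos rfl]
      congr 1
      refine Finset.prod_congr rfl fun j hj => ?_
      rw [if_neg (Finset.ne_of_mem_erase hj)]
    rw [hprod]
    ring
  calc ∑ π : Equiv.Perm G, MvPolynomial.pderiv τ (((Equiv.Perm.sign π : ℤ) : MvPolynomial G ℚ) * ∏ i, M (π i) i)
      = ∑ π : Equiv.Perm G, ∑ i : G, ((Equiv.Perm.sign π : ℤ) : MvPolynomial G ℚ)
          * ∏ j, (M.updateRow i fun j' => MvPolynomial.pderiv τ (M i j')) (π j) j := by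
        exact Finset.sum_congr rfl fun π _ => key π
    _ = _ := Finset.sum_comm

lemma adjugate_shift {R : Type*} [CommRing R] (f : G → R) (a b g : G) :
    (Matrix.of fun s t : G => f (s * t⁻¹)).adjugate (a * g) (b * g)
      = (Matrix.of fun s t : G => f (s * t⁻¹)).adjugate a b := by
  have h : (Matrix.of fun s t : G => f (s * t⁻¹)).submatrix
      (Equiv.mulRight g) (Equiv.mulRight g) = Matrix.of fun s t : G => f (s * t⁻¹) := by
    ext s t
    simp only [Matrix.submatrix_apply, Matrix.of_apply, Equiv.coe_mulRight]
    congr 1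
    group
  have := Matrix.adjugate_submatrix_equiv_self (Equiv.mulRight g)
    (Matrix.of fun s t : G => f (s * t⁻¹))
  rw [h] at this
  have h2 := congrFun (congrFun this a) b
  simpa using h2.symm

lemma groupDetDeriv_eq_adjugate (τ : G) :
    groupDetDeriv G τ = (groupMatrix G).adjugate 1 τ := by
  have hcard : (Fintype.card G : ℚ) ≠ 0 := Nat.cast_ne_zero.mpr Fintype.card_ne_zero
  rw [groupDetDeriv, pderiv_det]
  have hterm : ∀ i : G,
      ((groupMatrix G).updateRow i fun j => MvPolynomial.pderiv τ (groupMatrix G i j)).det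
        = (groupMatrix G).adjugate 1 τ := by
    intro i
    have h1 : (fun j => MvPolynomial.pderiv τ (groupMatrix G i j))
        = Pi.single (τ⁻¹ * i) (1 : MvPolynomial G ℚ) := by
      funext j
      simp only [groupMatrix, Matrix.of_apply, MvPolynomial.pderiv_X]
      rcases eq_or_ne j (τ⁻¹ * i) with h | h
      · subst h
        rw [Pi.single_eq_same]
        have : i * (τ⁻¹ * i)⁻¹ = τ := by group
        rw [this, Pi.single_eq_same]
      · rw [Pi.single_eq_of_ne h, Pi.single_eq_of_ne]
        intro hc
        exact h (by rw [← hc]; group)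
    rw [h1, ← Matrix.adjugate_apply]
    have h := adjugate_shift (fun g => (MvPolynomial.X g : MvPolynomial G ℚ)) 1 τ (τ⁻¹ * i)
    rw [show (1 : G) * (τ⁻¹ * i) = τ⁻¹ * i by group,
      show τ * (τ⁻¹ * i) = i by group] at h
    exact h
  simp only [hterm, Finset.sum_const, Finset.card_univ]
  rw [← Nat.cast_smul_eq_nsmul ℚ, smul_smul, inv_mul_cancel₀ hcard, one_smul]

lemma aeval_groupDetDeriv {L : Type*} [CommRing L] [Algebra ℚ L] (f : G → L) (τ : G) :
    MvPolynomial.aeval f (groupDetDeriv G τ)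
      = (Matrix.of fun s t : G => f (s * t⁻¹)).adjugate 1 τ := by
  rw [groupDetDeriv_eq_adjugate]
  have h := AlgHom.map_adjugate (MvPolynomial.aeval f : MvPolynomial G ℚ →ₐ[ℚ] L) (groupMatrix G)
  have hmap : (MvPolynomial.aeval f : MvPolynomial G ℚ →ₐ[ℚ] L).mapMatrix (groupMatrix G)
      = Matrix.of fun s t : G => f (s * t⁻¹) := by
    ext s t
    simp [groupMatrix]
  rw [hmap] at h
  exact congrFun (congrFun h 1) τ

end AuxLemmas

/-- Let `(a_i)_{i≥0} ∈ RS(F, ℚ)` be the sequence whose first `d` terms are the column of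
`P Γ_ξ⁻¹ κ` corresponding to the conjugacy class `K` of `G = Gal(L/ℚ)`.  Then for every
`i ≥ 0`, `a_i = (1/det Γ_ξ) Σ_{σ∈G} Σ_{τ∈K} σ(ξ^i) ∂_{στ}(ξ)`. -/
theorem stmt1 (L : Type*) [Field L] [CharZero L] [FiniteDimensional ℚ L] [IsGalois ℚ L]
    [DecidableEq (L ≃ₐ[ℚ] L)]
    (d : ℕ) (hd : 0 < d) (hdeg : Module.finrank ℚ L = d)
    (c : Fin d → ℤ) (F : Polynomial ℤ)
    (hF : F = Polynomial.X ^ d + ∑ j : Fin d, Polynomial.C (c j) * Polynomial.X ^ (j : ℕ))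
    (hFirr : Irreducible (F.map (Int.castRingHom ℚ)))
    (ξ : L) (hξ : Polynomial.aeval ξ F = 0)
    (hNB : ∃ b : Module.Basis (L ≃ₐ[ℚ] L) ℚ L, ∀ σ : L ≃ₐ[ℚ] L, b σ = σ ξ)
    (K : ConjClasses (L ≃ₐ[ℚ] L)) [DecidablePred (· ∈ K.carrier)]
    (a : ℕ → ℚ)
    (ha : ∀ i, a (i + d) = -∑ j : Fin d, (c j : ℚ) * a (i + (j : ℕ)))
    (hinit : ∀ i : Fin d, algebraMap ℚ L (a (i : ℕ)) =
      ∑ σ : L ≃ₐ[ℚ] L, (σ⁻¹ ξ) ^ (i : ℕ) *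
        ((Matrix.of fun σ' τ' : L ≃ₐ[ℚ] L => (σ' * τ'⁻¹) ξ)⁻¹.mulVec
          (fun τ : L ≃ₐ[ℚ] L => if τ ∈ K.carrier then (1 : L) else 0)) σ) :
    ∀ i : ℕ, algebraMap ℚ L (a i) =
      ((Matrix.of fun σ' τ' : L ≃ₐ[ℚ] L => (σ' * τ'⁻¹) ξ).det)⁻¹ *
        ∑ σ : L ≃ₐ[ℚ] L, ∑ τ : L ≃ₐ[ℚ] L,
          if τ ∈ K.carrier then
            σ (ξ ^ i) *
              MvPolynomial.aeval (fun ρ : L ≃ₐ[ℚ] L => ρ ξ) (groupDetDeriv _ (σ * τ))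
          else 0 := by
  set A : Matrix (L ≃ₐ[ℚ] L) (L ≃ₐ[ℚ] L) L :=
    Matrix.of fun σ' τ' : L ≃ₐ[ℚ] L => (σ' * τ'⁻¹) ξ with hA
  set w : (L ≃ₐ[ℚ] L) → L :=
    A⁻¹.mulVec (fun τ : L ≃ₐ[ℚ] L => if τ ∈ K.carrier then (1 : L) else 0) with hw0
  -- ξ^d in terms of lower powers
  have hxi : ξ ^ d = -∑ j : Fin d, (c j : L) * ξ ^ (j : ℕ) := by
    have h0 := hξ
    rw [hF] at h0
    simp only [map_add, map_pow, Polynomial.aeval_X, map_sum, _root_.map_mul, Polynomial.aeval_C,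
      map_intCast, eq_intCast] at h0
    linear_combination h0
  have hσd : ∀ σ : L ≃ₐ[ℚ] L, (σ ξ) ^ d = -∑ j : Fin d, (c j : L) * (σ ξ) ^ (j : ℕ) := by
    intro σ
    have h := congrArg σ hxi
    simpa [map_pow, map_neg, map_sum, _root_.map_mul, map_intCast] using h
  -- evaluation of ∂ as adjugate entry
  have hadj : ∀ g : L ≃ₐ[ℚ] L,
      MvPolynomial.aeval (fun ρ : L ≃ₐ[ℚ] L => ρ ξ) (groupDetDeriv _ g) = A.adjugate 1 g :=
    fun g => aeval_groupDetDeriv (fun ρ : L ≃ₐ[ℚ] L => ρ ξ) g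
  -- shift invariance of adjugate of A
  have hshift : ∀ a b g : L ≃ₐ[ℚ] L, A.adjugate (a * g) (b * g) = A.adjugate a b :=
    fun a b g => adjugate_shift (fun ρ : L ≃ₐ[ℚ] L => ρ ξ) a b g
  -- w in terms of adjugate
  have hw : ∀ σ : L ≃ₐ[ℚ] L,
      w σ = (A.det)⁻¹ * ∑ τ : L ≃ₐ[ℚ] L, (if τ ∈ K.carrier then A.adjugate σ τ else 0) := by
    intro σ
    rw [hw0, Matrix.inv_def, Ring.inverse_eq_inv]
    simp only [Matrix.mulVec, dotProduct, Matrix.smul_apply, smul_eq_mul,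
      mul_ite, mul_one, mul_zero, Finset.mul_sum]
  -- conjugation invariance of the carrier
  have hconj : ∀ σ τ : L ≃ₐ[ℚ] L, (σ⁻¹ * τ * σ ∈ K.carrier ↔ τ ∈ K.carrier) := by
    intro σ τ
    rw [ConjClasses.mem_carrier_iff_mk_eq, ConjClasses.mem_carrier_iff_mk_eq]
    have : ConjClasses.mk (σ⁻¹ * τ * σ) = ConjClasses.mk τ := by
      rw [ConjClasses.mk_eq_mk_iff_isConj]
      exact isConj_iff.mpr ⟨σ, by group⟩
    rw [this]
  -- main RHS transformation
  have hgoalRHS : ∀ n : ℕ,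
      (A.det)⁻¹ * ∑ σ : L ≃ₐ[ℚ] L, ∑ τ : L ≃ₐ[ℚ] L,
          (if τ ∈ K.carrier then σ (ξ ^ n) * A.adjugate 1 (σ * τ) else 0)
        = ∑ σ : L ≃ₐ[ℚ] L, (σ⁻¹ ξ) ^ n * w σ := by
    intro n
    have step1 : ∀ σ : L ≃ₐ[ℚ] L,
        ∑ τ : L ≃ₐ[ℚ] L, (if τ ∈ K.carrier then σ (ξ ^ n) * A.adjugate 1 (σ * τ) else 0)
          = ∑ τ : L ≃ₐ[ℚ] L, (if τ ∈ K.carrier then σ (ξ ^ n) * A.adjugate σ⁻¹ τ else 0) := by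
      intro σ
      rw [← Equiv.sum_comp ((Equiv.mulLeft σ⁻¹).trans (Equiv.mulRight σ))
        (fun τ : L ≃ₐ[ℚ] L => if τ ∈ K.carrier then σ (ξ ^ n) * A.adjugate 1 (σ * τ) else 0)]
      refine Finset.sum_congr rfl fun τ _ => ?_
      simp only [Equiv.trans_apply, Equiv.coe_mulLeft, Equiv.coe_mulRight]
      simp only [hconj σ τ]
      have h1 : σ * (σ⁻¹ * τ * σ) = τ * σ := by group
      rw [h1]
      have h2 : A.adjugate 1 (τ * σ) = A.adjugate σ⁻¹ τ := by
        have := hshift σ⁻¹ τ σ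
        rw [show σ⁻¹ * σ = 1 by group] at this
        exact this
      rw [h2]
    calc (A.det)⁻¹ * ∑ σ : L ≃ₐ[ℚ] L, ∑ τ : L ≃ₐ[ℚ] L,
          (if τ ∈ K.carrier then σ (ξ ^ n) * A.adjugate 1 (σ * τ) else 0)
        = (A.det)⁻¹ * ∑ σ : L ≃ₐ[ℚ] L, ∑ τ : L ≃ₐ[ℚ] L,
            (if τ ∈ K.carrier then σ (ξ ^ n) * A.adjugate σ⁻¹ τ else 0) := by
          rw [Finset.sum_congr rfl fun σ _ => step1 σ]
      _ = (A.det)⁻¹ * ∑ σ : L ≃ₐ[ℚ] L, ∑ τ : L ≃ₐ[ℚ] L,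
            (if τ ∈ K.carrier then (σ⁻¹ ξ) ^ n * A.adjugate σ τ else 0) := by
          rw [← Equiv.sum_comp (Equiv.inv (L ≃ₐ[ℚ] L))
            (fun σ : L ≃ₐ[ℚ] L => ∑ τ : L ≃ₐ[ℚ] L,
              (if τ ∈ K.carrier then σ (ξ ^ n) * A.adjugate σ⁻¹ τ else 0))]
          refine congrArg _ (Finset.sum_congr rfl fun σ _ => Finset.sum_congr rfl fun τ _ => ?_)
          simp [Equiv.inv_apply, map_pow]
      _ = ∑ σ : L ≃ₐ[ℚ] L, (σ⁻¹ ξ) ^ n * w σ := by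
          rw [Finset.mul_sum]
          refine Finset.sum_congr rfl fun σ _ => ?_
          rw [hw σ]
          rw [Finset.mul_sum, Finset.mul_sum, Finset.mul_sum]
          refine Finset.sum_congr rfl fun τ _ => ?_
          rcases em (τ ∈ K.carrier) with h | h <;> simp [h] <;> ring
  -- the sequence in terms of w
  have H : ∀ n : ℕ, algebraMap ℚ L (a n) = ∑ σ : L ≃ₐ[ℚ] L, (σ⁻¹ ξ) ^ n * w σ := by
    intro n
    induction n using Nat.strong_induction_on with
    | _ n ih =>
      by_cases hn : n < d
      · exact hinit ⟨n, hn⟩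
      · obtain ⟨m, rfl⟩ : ∃ m, n = m + d := ⟨n - d, by omega⟩
        have hterm : ∀ j : Fin d, algebraMap ℚ L ((c j : ℚ) * a (m + (j : ℕ)))
            = (c j : L) * ∑ σ : L ≃ₐ[ℚ] L, (σ⁻¹ ξ) ^ (m + (j : ℕ)) * w σ := by
          intro j
          rw [_root_.map_mul, ih (m + (j : ℕ)) (by omega), map_intCast]
        have hrec : ∑ σ : L ≃ₐ[ℚ] L, (σ⁻¹ ξ) ^ (m + d) * w σ
            = -∑ j : Fin d, (c j : L) * ∑ σ : L ≃ₐ[ℚ] L, (σ⁻¹ ξ) ^ (m + (j : ℕ)) * w σ := by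
          have hterm2 : ∀ σ : L ≃ₐ[ℚ] L, (σ⁻¹ ξ) ^ (m + d) * w σ
              = -∑ j : Fin d, (c j : L) * ((σ⁻¹ ξ) ^ (m + (j : ℕ)) * w σ) := by
            intro σ
            rw [pow_add, hσd σ⁻¹, mul_neg, neg_mul, neg_inj, Finset.mul_sum, Finset.sum_mul]
            exact Finset.sum_congr rfl fun j _ => by rw [pow_add]; ring
          rw [Finset.sum_congr rfl fun σ _ => hterm2 σ]
          rw [Finset.sum_neg_distrib, Finset.sum_comm, neg_inj]
          exact Finset.sum_congr rfl fun j _ => (Finset.mul_sum _ _ _).symm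
        rw [ha m, map_neg, map_sum, Finset.sum_congr rfl fun j _ => hterm j, ← hrec]
  intro i
  rw [H i, ← hgoalRHS i]
  refine congrArg _ (Finset.sum_congr rfl fun σ _ => Finset.sum_congr rfl fun τ _ => ?_)
  rw [hadj (σ * τ)]
end

section
/- Let Ψ : RS(F,L) → L ⊗_ℚ L be the L-linear map sending a sequence a = (a_i)_{i≥0} to Σ_{σ∈G} z_σ ⊗ σ^{−1}ξ, where the column vector [z_σ]_{σ∈G} equals P^{−1}·(a_0, …, a_{d−1})^t. Then Ψ is G-equivariant: for every γ ∈ G and every a ∈ RS(F,L), Ψ(γ·a) = γ·Ψ(a), where G acts on RS(F,L) termwise (γ·(a_i)_i = (γ(a_i))_i) and on L ⊗_ℚ L diagonally (γ·(x ⊗ y) = γx ⊗ γy). -/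
open scoped BigOperators TensorProduct

private theorem stmt6_adjoin_top (L : Type*) [Field L] [CharZero L] [FiniteDimensional ℚ L]
    (d : ℕ) (hdeg : Module.finrank ℚ L = d)
    (c : Fin d → ℤ) (F : Polynomial ℤ)
    (hF : F = Polynomial.X ^ d + ∑ j : Fin d, Polynomial.C (c j) * Polynomial.X ^ (j : ℕ))
    (hFirr : Irreducible (F.map (Int.castRingHom ℚ)))
    (ξ : L) (hξ : Polynomial.aeval ξ F = 0) :
    Algebra.adjoin ℚ {ξ} = ⊤ := by
  have hint : IsIntegral ℚ ξ := IsIntegral.of_finite ℚ ξ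
  have h2 : (∑ j : Fin d, Polynomial.C (c j) * Polynomial.X ^ (j : ℕ) : Polynomial ℤ).degree
      < (d : WithBot ℕ) := by
    apply lt_of_le_of_lt (Polynomial.degree_sum_le _ _)
    rw [Finset.sup_lt_iff (by exact_mod_cast WithBot.bot_lt_coe d)]
    intro j _
    exact lt_of_le_of_lt (Polynomial.degree_C_mul_X_pow_le _ _) (by exact_mod_cast j.2)
  have hFmonic : F.Monic := by
    rw [hF]; exact Polynomial.monic_X_pow_add h2
  have hFdeg : F.natDegree = d := by
    rw [hF]
    have : (Polynomial.X ^ d + ∑ j : Fin d, Polynomial.C (c j) * Polynomial.X ^ (j : ℕ) :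
        Polynomial ℤ).degree = d := by
      rw [Polynomial.degree_add_eq_left_of_degree_lt (by simpa using h2),
        Polynomial.degree_X_pow]
    exact Polynomial.natDegree_eq_of_degree_eq_some this
  have hFQmonic : (F.map (Int.castRingHom ℚ)).Monic := hFmonic.map _
  have haev : Polynomial.aeval ξ (F.map (Int.castRingHom ℚ)) = 0 := by
    rw [show (Int.castRingHom ℚ) = algebraMap ℤ ℚ from rfl,
      Polynomial.aeval_map_algebraMap]
    exact hξ
  have hmin : minpoly ℚ ξ = F.map (Int.castRingHom ℚ) :=
    (minpoly.eq_of_irreducible_of_monic hFirr haev hFQmonic).symm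
  have hdegmin : (minpoly ℚ ξ).natDegree = d := by
    rw [hmin, Polynomial.natDegree_map_eq_of_injective
      (Int.cast_injective (α := ℚ)), hFdeg]
  have hfr : Module.finrank ℚ (IntermediateField.adjoin ℚ {ξ} : IntermediateField ℚ L) = d := by
    rw [IntermediateField.adjoin.finrank hint, hdegmin]
  have htop : (IntermediateField.adjoin ℚ {ξ} : IntermediateField ℚ L) = ⊤ := by
    have := Submodule.eq_top_of_finrank_eq (K := ℚ) (V := L)
      (S := (IntermediateField.adjoin ℚ {ξ} : IntermediateField ℚ L).toSubalgebra.toSubmodule)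
      (by rw [hdeg]; exact hfr)
    apply IntermediateField.toSubalgebra_injective
    apply Subalgebra.toSubmodule_injective
    simpa using this
  have := congrArg IntermediateField.toSubalgebra htop
  rwa [IntermediateField.adjoin_simple_toSubalgebra_of_isAlgebraic hint.isAlgebraic,
    IntermediateField.top_toSubalgebra] at this

/-- The `L`-linear map `Ψ : RS(F,L) → L ⊗_ℚ L`, `a ↦ Σ_σ z_σ ⊗ σ⁻¹ξ` where
`(z_σ)_σ = P⁻¹ (a₀, …, a_{d-1})ᵗ`, is `G`-equivariant for the termwise `G`-action on
sequences and the diagonal `G`-action on `L ⊗_ℚ L`.  Here the index set `G = Gal(L/ℚ)`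
is identified with `Fin d` via a bijection `ι`. -/
theorem stmt6 (L : Type*) [Field L] [CharZero L] [FiniteDimensional ℚ L] [IsGalois ℚ L]
    (d : ℕ) (hd : 0 < d) (hdeg : Module.finrank ℚ L = d)
    (c : Fin d → ℤ) (F : Polynomial ℤ)
    (hF : F = Polynomial.X ^ d + ∑ j : Fin d, Polynomial.C (c j) * Polynomial.X ^ (j : ℕ))
    (hFirr : Irreducible (F.map (Int.castRingHom ℚ)))
    (ξ : L) (hξ : Polynomial.aeval ξ F = 0)
    (ι : Fin d ≃ (L ≃ₐ[ℚ] L))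
    (P : Matrix (Fin d) (Fin d) L)
    (hP : P = Matrix.of fun i j : Fin d => ((ι j)⁻¹ ξ) ^ (i : ℕ))
    (Ψ : (ℕ → L) → L ⊗[ℚ] L)
    (hΨ : ∀ a : ℕ → L,
      Ψ a = ∑ k : Fin d, (P⁻¹.mulVec fun i : Fin d => a (i : ℕ)) k ⊗ₜ[ℚ] ((ι k)⁻¹ ξ)) :
    ∀ γ : L ≃ₐ[ℚ] L, ∀ a : ℕ → L,
      (∀ i, a (i + d) = -∑ j : Fin d, (c j : L) * a (i + (j : ℕ))) →
      Ψ (fun i => γ (a i)) =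
        TensorProduct.map γ.toLinearMap γ.toLinearMap (Ψ a) := by
  intro γ a _
  have hadj : Algebra.adjoin ℚ {ξ} = ⊤ :=
    stmt6_adjoin_top L d hdeg c F hF hFirr ξ hξ
  -- injectivity of k ↦ (ι k)⁻¹ ξ
  have hxinj : Function.Injective (fun k : Fin d => ((ι k)⁻¹ : L ≃ₐ[ℚ] L) ξ) := by
    intro k m h
    have : ((ι k)⁻¹ : L ≃ₐ[ℚ] L) = (ι m)⁻¹ := by
      have := AlgHom.ext_of_adjoin_eq_top hadj
        (φ₁ := ((ι k)⁻¹ : L ≃ₐ[ℚ] L).toAlgHom) (φ₂ := ((ι m)⁻¹ : L ≃ₐ[ℚ] L).toAlgHom)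
        (fun x hx => by rw [Set.mem_singleton_iff] at hx; subst hx; exact h)
      exact AlgEquiv.coe_algHom_injective this
    exact ι.injective (inv_injective this)
  -- P is invertible
  have hPdet : IsUnit P.det := by
    have hPt : P = (Matrix.vandermonde fun k : Fin d => ((ι k)⁻¹ : L ≃ₐ[ℚ] L) ξ).transpose := by
      rw [hP]; ext i j; simp [Matrix.vandermonde, Matrix.transpose_apply]
    rw [isUnit_iff_ne_zero, hPt, Matrix.det_transpose, Matrix.det_vandermonde]
    apply Finset.prod_ne_zero_iff.2
    intro i _
    apply Finset.prod_ne_zero_iff.2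
    intro j hj
    rw [Finset.mem_Ioi] at hj
    exact sub_ne_zero_of_ne fun h => absurd (hxinj h) hj.ne'
  set v : Fin d → L := fun i : Fin d => a (i : ℕ) with hv
  set z : Fin d → L := P⁻¹.mulVec v with hz
  have hPz : P.mulVec z = v := by
    rw [hz, Matrix.mulVec_mulVec, Matrix.mul_nonsing_inv _ hPdet, Matrix.one_mulVec]
  -- permutation
  set π : Fin d ≃ Fin d := ι.trans ((Equiv.mulRight γ⁻¹).trans ι.symm) with hπ
  have hπk : ∀ k, ι (π k) = ι k * γ⁻¹ := fun k => by simp [hπ]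
  have hkey : ∀ k, ((ι (π k))⁻¹ : L ≃ₐ[ℚ] L) ξ = γ (((ι k)⁻¹ : L ≃ₐ[ℚ] L) ξ) := by
    intro k
    rw [hπk k, mul_inv_rev, inv_inv]
    rfl
  -- the transformed coefficient vector
  have hw : (P⁻¹.mulVec fun i : Fin d => γ (a (i : ℕ))) = fun m => γ (z (π.symm m)) := by
    have h1 : (fun i : Fin d => γ (a (i : ℕ))) = P.mulVec (fun m => γ (z (π.symm m))) := by
      funext i
      rw [Matrix.mulVec, dotProduct]
      rw [← Equiv.sum_comp π (fun m => P i m * γ (z (π.symm m)))]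
      have : ∀ k, P i (π k) * γ (z (π.symm (π k))) = γ (P i k * z k) := by
        intro k
        rw [Equiv.symm_apply_apply, map_mul, hP]
        simp only [Matrix.of_apply]
        rw [hkey k, map_pow]
      rw [Finset.sum_congr rfl fun k _ => this k, ← map_sum]
      have : ∑ k, P i k * z k = v i := by rw [← hPz]; rfl
      rw [this]
    rw [h1, Matrix.mulVec_mulVec, Matrix.nonsing_inv_mul _ hPdet, Matrix.one_mulVec]
  rw [hΨ, hΨ, hw]
  rw [← Equiv.sum_comp π (fun m => γ (z (π.symm m)) ⊗ₜ[ℚ] (((ι m)⁻¹ : L ≃ₐ[ℚ] L) ξ))]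
  rw [map_sum]
  apply Finset.sum_congr rfl
  intro k _
  rw [Equiv.symm_apply_apply, hkey k, TensorProduct.map_tmul]
  rfl
end

section
/- For α ∈ L, let φ_α : G → L be the function σ ↦ σ(α). Then the matrix Γ_ξ = [στ^{−1}ξ]_{σ,τ∈G} is invertible, and the family (φ_{σ^{−1}ξ})_{σ∈G} is an L-basis of the L-vector space X(G,L) of all functions from G to L. -/
open scoped BigOperators

/-- If `ξ` generates a normal basis of the finite Galois extension `L/ℚ` with group
`G = Gal(L/ℚ)`, then the matrix `Γ_ξ = [στ⁻¹ξ]` is invertible and the family of functions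
`φ_{σ⁻¹ξ} : τ ↦ τ(σ⁻¹ξ)` is an `L`-basis of the space `X(G, L)` of all functions `G → L`. -/
theorem stmt9 (L : Type*) [Field L] [CharZero L] [FiniteDimensional ℚ L] [IsGalois ℚ L]
    [DecidableEq (L ≃ₐ[ℚ] L)]
    (ξ : L)
    (hNB : ∃ b : Module.Basis (L ≃ₐ[ℚ] L) ℚ L, ∀ σ : L ≃ₐ[ℚ] L, b σ = σ ξ) :
    IsUnit (Matrix.of fun σ τ : L ≃ₐ[ℚ] L => (σ * τ⁻¹) ξ).det ∧
      LinearIndependent L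
        (fun σ : L ≃ₐ[ℚ] L => (fun τ : L ≃ₐ[ℚ] L => τ (σ⁻¹ ξ))) ∧
      Submodule.span L
          (Set.range fun σ : L ≃ₐ[ℚ] L => (fun τ : L ≃ₐ[ℚ] L => τ (σ⁻¹ ξ))) = ⊤ := by
  classical
  obtain ⟨b, hb⟩ := hNB
  let G := L ≃ₐ[ℚ] L
  -- Dedekind's linear independence of characters, specialized to `G`.
  have hchar : LinearIndependent L (fun σ : G => (σ : L → L)) := by
    have h1 : LinearIndependent L (M := L → L) (fun f => f : (L →* L) → L → L) :=
      linearIndependent_monoidHom L L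
    have hinj : Function.Injective (fun σ : G => (σ : L →* L)) := by
      intro σ τ h
      ext x
      exact DFunLike.congr_fun h x
    exact h1.comp _ hinj
  -- The rows of the matrix `Γ` are linearly independent over `L`.
  set Γ : Matrix G G L := Matrix.of fun σ τ : G => (σ * τ⁻¹) ξ with hΓ
  have hrows : LinearIndependent L (fun σ : G => Γ σ) := by
    rw [Fintype.linearIndependent_iff]
    intro c hc
    -- turn the row relation into a relation among the characters
    have hfun : ∑ σ : G, c σ • (σ : L → L) = 0 := by
      -- the `ℚ`-linear map `F : x ↦ ∑ σ, c σ • σ x` vanishes on the basis `b`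
      set F : L →ₗ[ℚ] L := ∑ σ : G, c σ • (σ.toLinearMap : L →ₗ[ℚ] L) with hF
      have hFb : ∀ ρ : G, F (b ρ) = 0 := by
        intro ρ
        have hcρ := congr_fun hc ρ⁻¹
        simp only [Finset.sum_apply, Pi.smul_apply, Pi.zero_apply, hΓ, Matrix.of_apply,
          smul_eq_mul, inv_inv] at hcρ
        rw [hF]
        simp only [LinearMap.sum_apply, LinearMap.smul_apply, AlgEquiv.toLinearMap_apply,
          smul_eq_mul, hb ρ]
        exact Eq.trans (Finset.sum_congr rfl fun d _ => rfl) hcρ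
      have hF0 : F = 0 := b.ext fun ρ => by simp [hFb ρ]
      funext x
      have := congr_arg (fun f : L →ₗ[ℚ] L => f x) hF0
      simpa [hF, LinearMap.sum_apply] using this
    exact Fintype.linearIndependent_iff.mp hchar c hfun
  have hunit : IsUnit Γ := Matrix.linearIndependent_rows_iff_isUnit.mp hrows
  have hdet : IsUnit Γ.det := (Matrix.isUnit_iff_isUnit_det Γ).mp hunit
  -- the family in question consists of the rows of `Γᵀ`
  have hfam : (fun σ : G => (fun τ : G => τ (σ⁻¹ ξ))) = fun σ : G => Γ.transpose σ := by
    funext σ τ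
    rfl
  have hli : LinearIndependent L (fun σ : G => (fun τ : G => τ (σ⁻¹ ξ))) := by
    rw [hfam]
    exact Matrix.linearIndependent_rows_iff_isUnit.mpr
      ((Matrix.isUnit_iff_isUnit_det Γ.transpose).mpr (by rw [Matrix.det_transpose]; exact hdet))
  refine ⟨hdet, hli, ?_⟩
  have hcard : Fintype.card G = Module.finrank L (G → L) := by
    simp [Module.finrank_pi]
  haveI : Nonempty G := ⟨1⟩
  exact hli.span_eq_top_of_card_eq_finrank hcard
end

section
/- Fix an embedding of L into ℂ and let E ⊆ ℂ be the compositum of L with the field ℚ_χ generated by the values of the irreducible characters of G. Let C' = [ψ(ρ_i)] be the r×r matrix with rows indexed by the conjugacy class representatives ρ_1, …, ρ_r and columns by ψ ∈ Irr(G). Then, in the E-vector space of functions G → E, the row vector of irreducible characters satisfies (ψ)_{ψ∈Irr(G)} = (φ_{σ^{−1}ξ})_{σ∈G} · Γ_ξ^{−1} · κ · C'; explicitly, for every ψ ∈ Irr(G) and every τ ∈ G, ψ(τ) = Σ_{σ∈G} (Γ_ξ^{−1} κ C')_{σ,ψ} · τσ^{−1}ξ. -/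
open scoped BigOperators

/-- `f : G → ℂ` is an irreducible character of `G` if it is the character of some
simple (= irreducible) finite-dimensional complex representation of `G`. -/
def IsIrrChar (G : Type) [Group G] (f : G → ℂ) : Prop :=
  ∃ V : FDRep ℂ G, CategoryTheory.Simple V ∧ f = fun g => FDRep.character V g

/-- Characters are class functions. -/
lemma isIrrChar_isConj {G : Type} [Group G] {f : G → ℂ} (hf : IsIrrChar G f)
    {x y : G} (h : IsConj x y) : f x = f y := by
  obtain ⟨V, -, rfl⟩ := hf
  obtain ⟨c, hc⟩ := isConj_iff.mp h
  simpa using (FDRep.char_conj V x c).symm.trans (congrArg V.character hc)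

/-- Cancellation: `Γ⁻¹` on the left side of `A` and then pairing with row `τ` of `Γ`
recovers `A τ i`. -/
lemma sum_inv_mul_apply {n p : Type} [Fintype n] [DecidableEq n] [Fintype p]
    (Γ : Matrix n n ℂ) (h : IsUnit Γ.det) (A : Matrix n p ℂ) (τ : n) (i : p) :
    ∑ σ, (Γ⁻¹ * A) σ i * Γ τ σ = A τ i := by
  have h1 : (∑ σ, (Γ⁻¹ * A) σ i * Γ τ σ) = (Γ * (Γ⁻¹ * A)) τ i := by
    rw [Matrix.mul_apply]
    exact Finset.sum_congr rfl fun σ _ => mul_comm _ _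
  rw [h1, ← Matrix.mul_assoc, Matrix.mul_nonsing_inv _ h, Matrix.one_mul]

/-- Fix an embedding `emb : L → ℂ`.  The row vector of irreducible characters of
`G = Gal(L/ℚ)` satisfies `(ψ)_ψ = (φ_{σ⁻¹ξ})_σ · Γ_ξ⁻¹ · κ · C'`; explicitly, for every
irreducible character `ψ` and every `τ ∈ G`,
`ψ(τ) = Σ_σ (Γ_ξ⁻¹ κ C')_{σ,ψ} · τσ⁻¹ξ`.  Here `ξ` generates a normal basis of `L/ℚ`,
`Γ_ξ = [στ⁻¹ξ]`, `κ` is the incidence matrix of the conjugacy classes `K_j` (with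
representatives `ρ j`), and `C' = [ψ(ρ_j)]`. -/
theorem stmt10 (L : Type) [Field L] [CharZero L] [FiniteDimensional ℚ L] [IsGalois ℚ L]
    [DecidableEq (L ≃ₐ[ℚ] L)]
    [∀ x y : L ≃ₐ[ℚ] L, Decidable (IsConj x y)]
    (ξ : L)
    (hNB : ∃ b : Module.Basis (L ≃ₐ[ℚ] L) ℚ L, ∀ σ : L ≃ₐ[ℚ] L, b σ = σ ξ)
    (emb : L →+* ℂ)
    (r : ℕ) (ρ : Fin r → (L ≃ₐ[ℚ] L))
    (hρ : ∀ g : L ≃ₐ[ℚ] L, ∃! j : Fin r, IsConj (ρ j) g)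
    (ι : Type) [Fintype ι] (ψ : ι → (L ≃ₐ[ℚ] L) → ℂ)
    (hirr : ∀ i, IsIrrChar (L ≃ₐ[ℚ] L) (ψ i))
    (hinj : Function.Injective ψ)
    (hall : ∀ f : (L ≃ₐ[ℚ] L) → ℂ, IsIrrChar (L ≃ₐ[ℚ] L) f → ∃ i, ψ i = f) :
    ∀ i : ι, ∀ τ : L ≃ₐ[ℚ] L,
      ψ i τ =
        ∑ σ : L ≃ₐ[ℚ] L,
          (((Matrix.of fun σ' τ' : L ≃ₐ[ℚ] L => emb ((σ' * τ'⁻¹) ξ))⁻¹ *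
              (Matrix.of fun (g : L ≃ₐ[ℚ] L) (j : Fin r) =>
                if IsConj (ρ j) g then (1 : ℂ) else 0) *
              (Matrix.of fun (j : Fin r) (i' : ι) => ψ i' (ρ j))) σ i) *
            emb ((τ * σ⁻¹) ξ) := by
  classical
  intro i τ
  obtain ⟨b, hb⟩ := hNB
  -- the reindexed normal basis `τ ↦ τ⁻¹ ξ`
  let b' : Module.Basis (L ≃ₐ[ℚ] L) ℚ L := b.reindex (Equiv.inv (L ≃ₐ[ℚ] L))
  have hb' : ∀ τ' : L ≃ₐ[ℚ] L, b' τ' = τ'⁻¹ ξ := by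
    intro τ'
    simp [b', hb]
  -- the bijection between `G` and embeddings `L →ₐ[ℚ] ℂ`
  let F : (L ≃ₐ[ℚ] L) → (L →ₐ[ℚ] ℂ) := fun σ => emb.toRatAlgHom.comp σ.toAlgHom
  have hFinj : Function.Injective F := by
    intro σ σ' h
    ext x
    have := congrArg (fun f : L →ₐ[ℚ] ℂ => f x) h
    simpa [F] using emb.injective this
  have hcard : Fintype.card (L ≃ₐ[ℚ] L) = Fintype.card (L →ₐ[ℚ] ℂ) := by
    rw [AlgHom.card ℚ L ℂ, ← Nat.card_eq_fintype_card, IsGalois.card_aut_eq_finrank]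
  have hFbij : Function.Bijective F :=
    (Fintype.bijective_iff_injective_and_card F).mpr ⟨hFinj, hcard⟩
  let e : (L ≃ₐ[ℚ] L) ≃ (L →ₐ[ℚ] ℂ) := Equiv.ofBijective F hFbij
  -- Γ is the transpose of the embeddings matrix, hence invertible
  have hΓeq : (Matrix.of fun σ' τ' : L ≃ₐ[ℚ] L => emb ((σ' * τ'⁻¹) ξ)) =
      (Algebra.embeddingsMatrixReindex ℚ ℂ b' e).transpose := by
    ext σ' τ'
    simp only [Matrix.transpose_apply, Algebra.embeddingsMatrixReindex, Matrix.reindex_apply,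
      Matrix.submatrix_apply, Equiv.refl_symm, Equiv.refl_apply, Equiv.symm_symm,
      Algebra.embeddingsMatrix_apply]
    simp only [Matrix.of_apply, hb', AlgEquiv.mul_apply]
    rfl
  have hdet : IsUnit (Matrix.of fun σ' τ' : L ≃ₐ[ℚ] L => emb ((σ' * τ'⁻¹) ξ)).det := by
    have hd := Algebra.discr_eq_det_embeddingsMatrixReindex_pow_two ℚ ℂ b' e
    have hne : algebraMap ℚ ℂ (Algebra.discr ℚ b') ≠ 0 := by
      simpa using Algebra.discr_not_zero_of_basis ℚ b'
    rw [hd] at hne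
    have h0 : (Algebra.embeddingsMatrixReindex ℚ ℂ b' e).det ≠ 0 := by
      intro h0; rw [h0] at hne; simp at hne
    rw [hΓeq, Matrix.det_transpose]
    exact IsUnit.mk0 _ h0
  have hrw : (∑ σ : L ≃ₐ[ℚ] L,
      (((Matrix.of fun σ' τ' : L ≃ₐ[ℚ] L => emb ((σ' * τ'⁻¹) ξ))⁻¹ *
          (Matrix.of fun (g : L ≃ₐ[ℚ] L) (j : Fin r) =>
            if IsConj (ρ j) g then (1 : ℂ) else 0) *
          (Matrix.of fun (j : Fin r) (i' : ι) => ψ i' (ρ j))) σ i) *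
        emb ((τ * σ⁻¹) ξ)) =
      ((Matrix.of fun (g : L ≃ₐ[ℚ] L) (j : Fin r) =>
            if IsConj (ρ j) g then (1 : ℂ) else 0) *
        (Matrix.of fun (j : Fin r) (i' : ι) => ψ i' (ρ j))) τ i := by
    rw [Matrix.mul_assoc]
    exact sum_inv_mul_apply _ hdet _ τ i
  rw [hrw, Matrix.mul_apply]
  obtain ⟨j₀, hj₀, huniq⟩ := hρ τ
  rw [Finset.sum_eq_single j₀]
  · simp only [Matrix.of_apply, if_pos hj₀, one_mul]
    exact (isIrrChar_isConj (hirr i) hj₀).symm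
  · intro j _ hj
    have : ¬ IsConj (ρ j) τ := fun h => hj (huniq j h)
    simp only [Matrix.of_apply, if_neg this, zero_mul]
  · intro h; exact absurd (Finset.mem_univ j₀) h
end

section
/- Let K be a conjugacy class of G, let a = (a_i)_{i≥0} ∈ RS(F,ℚ), and define [z_σ]_{σ∈G} = P^{−1}·(a_0,…,a_{d−1})^t ∈ L^d. Assume that for every τ ∈ G one has Σ_{σ∈G} z_σ · τ(σ^{−1}ξ) = 1 if τ ∈ K and = 0 if τ ∉ K. Let p be a prime number unramified in L, let 𝔭 be a prime ideal of the ring of integers of L lying above p, and let Frob_𝔭 ∈ G be the Frobenius automorphism of 𝔭 (so Frob_𝔭(x) ≡ x^p (mod 𝔭) for every 𝔭-integral x). Assume moreover that each z_σ is 𝔭-integral and each a_i is p-integral. Then a_p ≡ 1 (mod p) if Frob_𝔭 ∈ K, and a_p ≡ 0 (mod p) otherwise. -/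
open scoped BigOperators

/-- An element `z` of a number field `L` is `𝔭`-integral: `z = x/s` with `x, s`
algebraic integers and `s ∉ 𝔭`. -/
def IsPIntegral (L : Type*) [Field L] [CharZero L]
    (𝔭 : Ideal (NumberField.RingOfIntegers L)) (z : L) : Prop :=
  ∃ x s : NumberField.RingOfIntegers L, s ∉ 𝔭 ∧
    z * algebraMap (NumberField.RingOfIntegers L) L s =
      algebraMap (NumberField.RingOfIntegers L) L x

/-- Let `K` be a conjugacy class of `G = Gal(L/ℚ)`, let `(a_i)_{i≥0} ∈ RS(F,ℚ)`, and let
`(z_σ)_{σ∈G} = P⁻¹ (a₀,…,a_{d-1})ᵗ` (expressed as `Σ_σ z_σ (σ⁻¹ξ)^i = a_i` for `i < d`).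
Assume `Σ_σ z_σ · τ(σ⁻¹ξ)` equals `1` for `τ ∈ K` and `0` for `τ ∉ K`.  Let `p` be a
prime unramified in `L`, `𝔭` a prime of `L` above `p` with Frobenius `Frob_𝔭`, and assume
each `z_σ` is `𝔭`-integral and each `a_i` is `p`-integral.  Then `a_p ≡ 1 (mod p)` if
`Frob_𝔭 ∈ K` and `a_p ≡ 0 (mod p)` otherwise. -/
theorem stmt12 (L : Type*) [Field L] [CharZero L] [FiniteDimensional ℚ L] [IsGalois ℚ L]
    [DecidableEq (L ≃ₐ[ℚ] L)]
    (d : ℕ) (hd : 0 < d) (hdeg : Module.finrank ℚ L = d)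
    (c : Fin d → ℤ) (F : Polynomial ℤ)
    (hF : F = Polynomial.X ^ d + ∑ j : Fin d, Polynomial.C (c j) * Polynomial.X ^ (j : ℕ))
    (hFirr : Irreducible (F.map (Int.castRingHom ℚ)))
    (ξ : L) (hξ : Polynomial.aeval ξ F = 0)
    (K : ConjClasses (L ≃ₐ[ℚ] L)) [DecidablePred (· ∈ K.carrier)]
    (a : ℕ → ℚ)
    (ha : ∀ i, a (i + d) = -∑ j : Fin d, (c j : ℚ) * a (i + (j : ℕ)))
    (z : (L ≃ₐ[ℚ] L) → L)
    (hz : ∀ i : Fin d, algebraMap ℚ L (a (i : ℕ)) =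
      ∑ σ : L ≃ₐ[ℚ] L, z σ * (σ⁻¹ ξ) ^ (i : ℕ))
    (hK : ∀ τ : L ≃ₐ[ℚ] L,
      (∑ σ : L ≃ₐ[ℚ] L, z σ * τ (σ⁻¹ ξ)) = if τ ∈ K.carrier then 1 else 0)
    (p : ℕ) (hp : p.Prime)
    (hunram : ∀ 𝔮 : Ideal (NumberField.RingOfIntegers L), 𝔮.IsMaximal →
      (p : NumberField.RingOfIntegers L) ∈ 𝔮 → 𝔮 ^ 2 ∣ Ideal.span {(p : NumberField.RingOfIntegers L)} → False)
    (𝔭 : Ideal (NumberField.RingOfIntegers L)) (h𝔭 : 𝔭.IsMaximal)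
    (hp𝔭 : (p : NumberField.RingOfIntegers L) ∈ 𝔭)
    (Frob : L ≃ₐ[ℚ] L)
    (hFrob : ∀ x y : NumberField.RingOfIntegers L,
      algebraMap (NumberField.RingOfIntegers L) L y =
        Frob (algebraMap (NumberField.RingOfIntegers L) L x) →
      y - x ^ p ∈ 𝔭)
    (hzint : ∀ σ : L ≃ₐ[ℚ] L, IsPIntegral L 𝔭 (z σ))
    (haint : ∀ i : ℕ, ∃ m n : ℤ, ¬ (p : ℤ) ∣ n ∧ a i * (n : ℚ) = (m : ℚ)) :
    (Frob ∈ K.carrier → RatModEq p (a p) 1) ∧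
      (Frob ∉ K.carrier → RatModEq p (a p) 0) := by
  have hprime : 𝔭.IsPrime := h𝔭.isPrime
  -- ξ is an algebraic integer
  have hFm : F.Monic := by
    rw [hF]
    refine Polynomial.monic_X_pow_add (lt_of_le_of_lt (Polynomial.degree_sum_le _ _) ?_)
    rw [Finset.sup_lt_iff (by exact_mod_cast WithBot.bot_lt_coe d)]
    intro j _
    exact lt_of_le_of_lt (Polynomial.degree_C_mul_X_pow_le _ _) (by exact_mod_cast j.2)
  have hintξ : IsIntegral ℤ ξ := ⟨F, hFm, by rw [← Polynomial.aeval_def]; exact hξ⟩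
  -- the root relation
  have hξd : ξ ^ d = -∑ j : Fin d, (c j : L) * ξ ^ (j : ℕ) := by
    have h := hξ
    rw [hF] at h
    simp only [map_add, map_pow, Polynomial.aeval_X, map_sum, map_mul, Polynomial.aeval_C,
      map_intCast, eq_intCast] at h
    exact eq_neg_of_add_eq_zero_left h
  have hroot : ∀ σ : L ≃ₐ[ℚ] L,
      (σ⁻¹ ξ) ^ d = -∑ j : Fin d, (c j : L) * (σ⁻¹ ξ) ^ (j : ℕ) := by
    intro σ
    have h := congrArg (⇑(σ⁻¹ : L ≃ₐ[ℚ] L)) hξd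
    simpa only [map_pow, map_neg, map_sum, map_mul, map_intCast] using h
  -- extend hz to all indices
  have key : ∀ i : ℕ, algebraMap ℚ L (a i) = ∑ σ : L ≃ₐ[ℚ] L, z σ * (σ⁻¹ ξ) ^ i := by
    intro i
    induction i using Nat.strong_induction_on with
    | _ i ih =>
      rcases Nat.lt_or_ge i d with h | h
      · exact hz ⟨i, h⟩
      · obtain ⟨k, rfl⟩ : ∃ k, i = k + d := ⟨i - d, (Nat.sub_add_cancel h).symm⟩
        have rhs : ∑ σ : L ≃ₐ[ℚ] L, z σ * (σ⁻¹ ξ) ^ (k + d)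
            = -∑ j : Fin d, (c j : L) * ∑ σ : L ≃ₐ[ℚ] L, z σ * (σ⁻¹ ξ) ^ (k + (j : ℕ)) := by
          calc ∑ σ : L ≃ₐ[ℚ] L, z σ * (σ⁻¹ ξ) ^ (k + d)
              = ∑ σ : L ≃ₐ[ℚ] L, ∑ j : Fin d,
                  -((c j : L) * (z σ * (σ⁻¹ ξ) ^ (k + (j : ℕ)))) := by
                refine Finset.sum_congr rfl fun σ _ => ?_
                rw [pow_add, hroot σ, mul_neg, mul_neg, Finset.mul_sum, Finset.mul_sum,
                  ← Finset.sum_neg_distrib]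
                refine Finset.sum_congr rfl fun j _ => ?_
                rw [pow_add]; ring
            _ = ∑ j : Fin d, ∑ σ : L ≃ₐ[ℚ] L,
                  -((c j : L) * (z σ * (σ⁻¹ ξ) ^ (k + (j : ℕ)))) := Finset.sum_comm
            _ = -∑ j : Fin d, (c j : L) * ∑ σ : L ≃ₐ[ℚ] L, z σ * (σ⁻¹ ξ) ^ (k + (j : ℕ)) := by
                rw [← Finset.sum_neg_distrib]
                refine Finset.sum_congr rfl fun j _ => ?_
                rw [Finset.mul_sum, Finset.sum_neg_distrib]
        rw [ha k, map_neg, map_sum, rhs]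
        refine neg_inj.2 (Finset.sum_congr rfl fun j _ => ?_)
        rw [map_mul, map_intCast, ih (k + (j : ℕ)) (by have := j.2; omega)]
  -- integral elements
  have hintσ : ∀ σ : L ≃ₐ[ℚ] L, IsIntegral ℤ (σ⁻¹ ξ) :=
    fun σ => map_isIntegral_int (σ⁻¹ : L ≃ₐ[ℚ] L) hintξ
  set u : (L ≃ₐ[ℚ] L) → NumberField.RingOfIntegers L :=
    fun σ => ⟨σ⁻¹ ξ, hintσ σ⟩ with hu
  set v : (L ≃ₐ[ℚ] L) → NumberField.RingOfIntegers L :=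
    fun σ => ⟨Frob (σ⁻¹ ξ), map_isIntegral_int Frob (hintσ σ)⟩ with hv
  -- p-integrality data for z
  choose x s hs hzs using hzint
  set S : NumberField.RingOfIntegers L := ∏ σ : L ≃ₐ[ℚ] L, s σ with hS
  have hSnot : S ∉ 𝔭 := by
    refine Finset.prod_induction s (· ∉ 𝔭)
      (fun a b ha hb hab => (hprime.mem_or_mem hab).elim ha hb)
      (fun h1 => hprime.ne_top ((Ideal.eq_top_iff_one _).2 h1))
      (fun σ _ => hs σ)
  set X : NumberField.RingOfIntegers L :=
    ∑ σ : L ≃ₐ[ℚ] L, x σ * (∏ σ' ∈ Finset.univ.erase σ, s σ') * (u σ ^ p - v σ) with hX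
  have hXmem : X ∈ 𝔭 := by
    refine Ideal.sum_mem _ fun σ _ => Ideal.mul_mem_left _ _ ?_
    have h1 := hFrob (u σ) (v σ) rfl
    simpa [neg_sub] using neg_mem h1
  set ε : ℚ := if Frob ∈ K.carrier then 1 else 0 with hε
  -- the main congruence in L
  have hmain : algebraMap ℚ L (a p - ε) *
      algebraMap (NumberField.RingOfIntegers L) L S =
      algebraMap (NumberField.RingOfIntegers L) L X := by
    have h1 : algebraMap ℚ L (a p) = ∑ σ : L ≃ₐ[ℚ] L, z σ * (σ⁻¹ ξ) ^ p := key p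
    have h2 : algebraMap ℚ L ε = ∑ σ : L ≃ₐ[ℚ] L, z σ * Frob (σ⁻¹ ξ) := by
      rw [hK Frob, hε]; split <;> simp
    rw [map_sub, h1, h2, ← Finset.sum_sub_distrib, Finset.sum_mul, hX, map_sum]
    refine Finset.sum_congr rfl fun σ _ => ?_
    have hSsplit : algebraMap (NumberField.RingOfIntegers L) L S =
        algebraMap (NumberField.RingOfIntegers L) L (s σ) *
          algebraMap (NumberField.RingOfIntegers L) L (∏ σ' ∈ Finset.univ.erase σ, s σ') := by
      rw [← map_mul, hS, ← Finset.mul_prod_erase Finset.univ s (Finset.mem_univ σ)]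
    have hd1 : (σ⁻¹ ξ) ^ p - Frob (σ⁻¹ ξ) =
        algebraMap (NumberField.RingOfIntegers L) L (u σ ^ p - v σ) := by
      rw [map_sub, map_pow]; rfl
    calc (z σ * (σ⁻¹ ξ) ^ p - z σ * Frob (σ⁻¹ ξ)) *
          algebraMap (NumberField.RingOfIntegers L) L S
        = (z σ * algebraMap (NumberField.RingOfIntegers L) L (s σ)) *
            (algebraMap (NumberField.RingOfIntegers L) L (∏ σ' ∈ Finset.univ.erase σ, s σ') *
              ((σ⁻¹ ξ) ^ p - Frob (σ⁻¹ ξ))) := by rw [hSsplit]; ring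
      _ = algebraMap (NumberField.RingOfIntegers L) L (x σ) *
            (algebraMap (NumberField.RingOfIntegers L) L (∏ σ' ∈ Finset.univ.erase σ, s σ') *
              algebraMap (NumberField.RingOfIntegers L) L (u σ ^ p - v σ)) := by
          rw [hzs σ, hd1]
      _ = algebraMap (NumberField.RingOfIntegers L) L
            (x σ * (∏ σ' ∈ Finset.univ.erase σ, s σ') * (u σ ^ p - v σ)) := by
          rw [map_mul, map_mul, mul_assoc]
  -- rational bookkeeping
  obtain ⟨m, n, hn, hmn⟩ := haint p
  set m' : ℤ := if Frob ∈ K.carrier then m - n else m with hm'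
  have hqn : (a p - ε) * (n : ℚ) = (m' : ℚ) := by
    rw [hε, hm']
    split
    · rw [sub_mul, one_mul, hmn]; push_cast; ring
    · rw [sub_zero, hmn]
  have hOinj : Function.Injective (algebraMap (NumberField.RingOfIntegers L) L) :=
    FaithfulSMul.algebraMap_injective _ _
  have hm'mem : ((m' : NumberField.RingOfIntegers L)) ∈ 𝔭 := by
    have hL : algebraMap (NumberField.RingOfIntegers L) L ((m' : NumberField.RingOfIntegers L) * S)
        = algebraMap (NumberField.RingOfIntegers L) L (X * (n : NumberField.RingOfIntegers L)) := by
      rw [map_mul, map_mul]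
      have e1 : algebraMap (NumberField.RingOfIntegers L) L
          ((m' : NumberField.RingOfIntegers L)) = algebraMap ℚ L ((m' : ℚ)) := by
        rw [map_intCast, map_intCast]
      have e2 : algebraMap (NumberField.RingOfIntegers L) L
          ((n : NumberField.RingOfIntegers L)) = algebraMap ℚ L ((n : ℚ)) := by
        rw [map_intCast, map_intCast]
      rw [e1, e2, ← hqn, map_mul, ← hmain]; ring
    have hmem : (m' : NumberField.RingOfIntegers L) * S ∈ 𝔭 := by
      rw [hOinj hL]; exact Ideal.mul_mem_right _ _ hXmem
    exact (hprime.mem_or_mem hmem).resolve_right hSnot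
  have hpm' : (p : ℤ) ∣ m' := by
    by_contra hnd
    obtain ⟨A, B, hAB⟩ := ((Nat.prime_iff_prime_int.1 hp).coprime_iff_not_dvd).2 hnd
    have h2 := Ideal.add_mem 𝔭 (Ideal.mul_mem_left 𝔭 (A : NumberField.RingOfIntegers L) hp𝔭)
      (Ideal.mul_mem_left 𝔭 (B : NumberField.RingOfIntegers L) hm'mem)
    have h3 : ((A * (p : ℤ) + B * m' : ℤ) : NumberField.RingOfIntegers L) ∈ 𝔭 := by
      push_cast; exact h2
    rw [hAB] at h3
    exact h𝔭.ne_top ((Ideal.eq_top_iff_one _).2 (by exact_mod_cast h3))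
  obtain ⟨m0, hm0⟩ := hpm'
  have hfin : RatModEq p (a p) ε := by
    refine ⟨m0, n, hn, ?_⟩
    rw [hqn]
    exact_mod_cast congrArg (Int.cast : ℤ → ℚ) hm0
  constructor
  · intro h
    have h' := hfin
    rw [hε, if_pos h] at h'
    exact h'
  · intro h
    have h' := hfin
    rw [hε, if_neg h] at h'
    exact h'
end

section
/- For every conjugacy class K_j of G and every integer i ≥ 0, the element a_{K_j,i} = (1/det Γ_ξ) · Σ_{σ∈G} Σ_{τ∈K_j} σ(ξ^i) · ∂_{στ}(ξ) of L is fixed by every γ ∈ G; hence a_{K_j,i} is a rational number. -/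
open scoped BigOperators

/-- The element `a_{K,i} = (1/det Γ_ξ) Σ_{σ∈G} Σ_{τ∈K} σ(ξ^i) ∂_{στ}(ξ)` of `L`, where
`K` is a conjugacy class of `G = Gal(L/ℚ)` and `∂_τ(ξ)`, `Γ_ξ` are the evaluations
at `X_σ = σξ`. -/
noncomputable def aTerm (L : Type*) [Field L] [CharZero L]
    [Fintype (L ≃ₐ[ℚ] L)] [DecidableEq (L ≃ₐ[ℚ] L)]
    (ξ : L) (K : ConjClasses (L ≃ₐ[ℚ] L)) [DecidablePred (· ∈ K.carrier)] (i : ℕ) : L :=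
  ((Matrix.of fun σ τ : L ≃ₐ[ℚ] L => (σ * τ⁻¹) ξ).det)⁻¹ *
    ∑ σ : L ≃ₐ[ℚ] L, ∑ τ : L ≃ₐ[ℚ] L,
      if τ ∈ K.carrier then
        σ (ξ ^ i) *
          MvPolynomial.aeval (fun ρ : L ≃ₐ[ℚ] L => ρ ξ) (groupDetDeriv _ (σ * τ))
      else 0

section aux
variable {G : Type*} [Group G] [Fintype G] [DecidableEq G]

lemma rename_groupMatrix_det (γ : G) :
    MvPolynomial.rename (fun ρ => γ * ρ) (groupMatrix G).det =
      ((Equiv.Perm.sign (Equiv.mulLeft γ) : ℤ)) • (groupMatrix G).det := by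
  have h1 : MvPolynomial.rename (fun ρ => γ * ρ) (groupMatrix G).det =
      ((groupMatrix G).map (MvPolynomial.rename (fun ρ => γ * ρ))).det :=
    RingHom.map_det _ _
  have h2 : (groupMatrix G).map (MvPolynomial.rename (fun ρ => γ * ρ)) =
      (groupMatrix G).submatrix (Equiv.mulLeft γ) id := by
    ext σ τ
    simp [groupMatrix, Matrix.map_apply, Matrix.submatrix_apply, mul_assoc]
  rw [h1, h2, Matrix.det_permute]
  simp [zsmul_eq_mul]

lemma rename_groupDetDeriv (γ τ : G) :
    MvPolynomial.rename (fun ρ => γ * ρ) (groupDetDeriv G τ) =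
      ((Equiv.Perm.sign (Equiv.mulLeft γ) : ℤ)) • groupDetDeriv G (γ * τ) := by
  unfold groupDetDeriv
  rw [map_smul, ← MvPolynomial.pderiv_rename (mul_right_injective γ) τ,
    rename_groupMatrix_det, map_zsmul, smul_comm]

end aux

lemma galois_aeval_comm {L : Type*} [Field L] [Algebra ℚ L]
    (γ : L ≃ₐ[ℚ] L) (ξ : L) (p : MvPolynomial (L ≃ₐ[ℚ] L) ℚ) :
    γ (MvPolynomial.aeval (fun ρ : L ≃ₐ[ℚ] L => ρ ξ) p) =
      MvPolynomial.aeval (fun ρ : L ≃ₐ[ℚ] L => ρ ξ)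
        (MvPolynomial.rename (fun ρ => γ * ρ) p) := by
  rw [MvPolynomial.aeval_rename]
  exact (MvPolynomial.comp_aeval_apply (f := fun ρ : L ≃ₐ[ℚ] L => ρ ξ) γ.toAlgHom p)

/-- For every conjugacy class `K` of `G` and every `i ≥ 0`, the element
`a_{K,i} = (1/det Γ_ξ) Σ_{σ∈G} Σ_{τ∈K} σ(ξ^i) ∂_{στ}(ξ)` is fixed by every `γ ∈ G`, and
hence is a rational number. -/
theorem stmt17 (L : Type*) [Field L] [CharZero L] [FiniteDimensional ℚ L] [IsGalois ℚ L]
    [DecidableEq (L ≃ₐ[ℚ] L)]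
    (d : ℕ) (hd : 0 < d)
    (c : Fin d → ℤ) (F : Polynomial ℤ)
    (hF : F = Polynomial.X ^ d + ∑ j : Fin d, Polynomial.C (c j) * Polynomial.X ^ (j : ℕ))
    (hFirr : Irreducible (F.map (Int.castRingHom ℚ)))
    (ξ : L) (hξ : Polynomial.aeval ξ F = 0)
    (hNB : ∃ b : Module.Basis (L ≃ₐ[ℚ] L) ℚ L, ∀ σ : L ≃ₐ[ℚ] L, b σ = σ ξ)
    (K : ConjClasses (L ≃ₐ[ℚ] L)) [DecidablePred (· ∈ K.carrier)] (i : ℕ) :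
    (∀ γ : L ≃ₐ[ℚ] L, γ (aTerm L ξ K i) = aTerm L ξ K i) ∧
      ∃ q : ℚ, aTerm L ξ K i = algebraMap ℚ L q := by
  have hfix : ∀ γ : L ≃ₐ[ℚ] L, γ (aTerm L ξ K i) = aTerm L ξ K i := by
    intro γ
    set s : ℤ := ((Equiv.Perm.sign (Equiv.mulLeft γ) : ℤ)) with hsdef
    have hs2 : (s : L) * (s : L) = 1 := by
      have h : s * s = 1 := by
        rw [hsdef, ← Units.val_mul, ← Units.val_one]
        norm_cast
        exact Int.units_mul_self _
      exact_mod_cast congrArg (fun n : ℤ => (n : L)) h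
    have hsne : (s : L) ≠ 0 := by
      intro h
      rw [h, zero_mul] at hs2
      exact zero_ne_one hs2
    have hD : MvPolynomial.aeval (fun ρ : L ≃ₐ[ℚ] L => ρ ξ) (groupMatrix (L ≃ₐ[ℚ] L)).det =
        (Matrix.of fun σ τ : L ≃ₐ[ℚ] L => (σ * τ⁻¹) ξ).det := by
      rw [AlgHom.map_det]
      congr 1
      ext σ τ
      simp [groupMatrix, Matrix.map_apply]
    have hγD : γ ((Matrix.of fun σ τ : L ≃ₐ[ℚ] L => (σ * τ⁻¹) ξ).det) =
        (s : L) * (Matrix.of fun σ τ : L ≃ₐ[ℚ] L => (σ * τ⁻¹) ξ).det := by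
      rw [← hD, galois_aeval_comm, rename_groupMatrix_det, map_zsmul, zsmul_eq_mul, hsdef]
    have hgd : ∀ τ₀ : L ≃ₐ[ℚ] L,
        γ (MvPolynomial.aeval (fun ρ : L ≃ₐ[ℚ] L => ρ ξ) (groupDetDeriv _ τ₀)) =
          (s : L) * MvPolynomial.aeval (fun ρ : L ≃ₐ[ℚ] L => ρ ξ)
            (groupDetDeriv _ (γ * τ₀)) := by
      intro τ₀
      rw [galois_aeval_comm, rename_groupDetDeriv, map_zsmul, zsmul_eq_mul, hsdef]
    have hγS : γ (∑ σ : L ≃ₐ[ℚ] L, ∑ τ : L ≃ₐ[ℚ] L,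
        (if τ ∈ K.carrier then σ (ξ ^ i) * MvPolynomial.aeval (fun ρ : L ≃ₐ[ℚ] L => ρ ξ)
          (groupDetDeriv _ (σ * τ)) else 0)) =
        (s : L) * ∑ σ : L ≃ₐ[ℚ] L, ∑ τ : L ≃ₐ[ℚ] L,
        (if τ ∈ K.carrier then σ (ξ ^ i) * MvPolynomial.aeval (fun ρ : L ≃ₐ[ℚ] L => ρ ξ)
          (groupDetDeriv _ (σ * τ)) else 0) := by
      rw [map_sum, Finset.mul_sum]
      refine Fintype.sum_equiv (Equiv.mulLeft γ) _ _ ?_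
      intro σ
      rw [map_sum, Finset.mul_sum]
      refine Finset.sum_congr rfl ?_
      intro τ _
      rw [apply_ite γ, map_zero, map_mul, hgd]
      by_cases hτ : τ ∈ K.carrier
      · simp only [hτ, if_true]
        have h1 : γ (σ (ξ ^ i)) = (Equiv.mulLeft γ σ) (ξ ^ i) := rfl
        rw [h1]
        have h2 : γ * (σ * τ) = Equiv.mulLeft γ σ * τ := by
          simp [Equiv.mulLeft, mul_assoc]
        rw [h2]
        ring
      · simp [hτ]
    have final : ∀ D S : L, ((s : L) * D)⁻¹ * ((s : L) * S) = D⁻¹ * S := by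
      intro D S
      rw [mul_inv]
      calc (s : L)⁻¹ * D⁻¹ * ((s : L) * S) = ((s : L)⁻¹ * (s : L)) * (D⁻¹ * S) := by ring
        _ = D⁻¹ * S := by rw [inv_mul_cancel₀ hsne, one_mul]
    unfold aTerm
    rw [map_mul, map_inv₀, hγD, hγS]
    exact final _ _
  refine ⟨hfix, ?_⟩
  have hmem : aTerm L ξ K i ∈
      IntermediateField.fixedField (⊤ : Subgroup (L ≃ₐ[ℚ] L)) := by
    intro g
    exact hfix g.1
  rw [← IntermediateField.fixingSubgroup_bot,
    IsGalois.fixedField_fixingSubgroup (⊥ : IntermediateField ℚ L),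
    IntermediateField.mem_bot] at hmem
  obtain ⟨q, hq⟩ := hmem
  exact ⟨q, hq.symm⟩
end
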